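/- (Dynkin–Specht–Wever) Let X be a set and A = FreeAlgebra ℚ X, graded by word length with degree-n component Tₙ(X) spanned by words of length n. Let Lie(X) ⊆ A be the Lie subalgebra generated by the letters (the free Lie algebra on X), and let D : A → A be the ℚ-linear map defined on words by D(y₁⋯yₙ) := [⋯[[y₁, y₂], y₃]⋯, yₙ] for letters y_i ∈ X. Then for every n ≥ 1 and every l ∈ Tₙ(X) ∩ Lie(X), one has D(l) = n·l. Consequently, the operator (1/n)·D restricted to Tₙ(X) is a projection of Tₙ(X) onto Tₙ(X) ∩ Lie(X). -/

import Mathlib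

attribute [local instance 100] LieRing.ofAssociativeRing

noncomputable section DSWAux

open FreeAlgebra MulOpposite

variable {X : Type}

private def W (l : List X) : FreeAlgebra ℚ X := (l.map (ι ℚ)).prod

private lemma W_singleton (x : X) : W [x] = ι ℚ x := by simp [W]

private lemma basis_eq (l : FreeMonoid X) :
    basisFreeMonoid ℚ X l = W (FreeMonoid.toList l) := by
  have h1 : basisFreeMonoid ℚ X l
      = (equivMonoidAlgebraFreeMonoid (R := ℚ) (X := X)).symm (MonoidAlgebra.single l 1) := by
    rw [basisFreeMonoid]
    simp [Module.Basis.map_apply]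
  rw [h1, equivMonoidAlgebraFreeMonoid]
  simp [AlgEquiv.ofAlgHom, MonoidAlgebra.lift_single, FreeMonoid.lift_apply]
  rfl

private def proj (n : ℕ) : FreeAlgebra ℚ X →ₗ[ℚ] FreeAlgebra ℚ X :=
  (basisFreeMonoid ℚ X).constr ℚ fun l =>
    if (FreeMonoid.toList l).length = n then basisFreeMonoid ℚ X l else 0

private lemma proj_W (n : ℕ) (l : List X) :
    proj n (W l) = if l.length = n then W l else 0 := by
  have h : W l = basisFreeMonoid ℚ X (FreeMonoid.ofList l) := by
    rw [basis_eq, FreeMonoid.toList_ofList]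
  rw [h, proj, Module.Basis.constr_basis]
  simp [basis_eq]

private def Wspan (n : ℕ) : Submodule ℚ (FreeAlgebra ℚ X) :=
  Submodule.span ℚ {w | ∃ l : List X, l.length = n ∧ w = W l}

private lemma T_eq (T : ℕ → Submodule ℚ (FreeAlgebra ℚ X))
    (hT : ∀ n : ℕ, T n = Submodule.span ℚ
      { w : FreeAlgebra ℚ X | ∃ y : Fin n → X,
          w = (List.ofFn fun i => FreeAlgebra.ι ℚ (y i)).prod }) (n : ℕ) :
    T n = Wspan n := by
  rw [hT n, Wspan]
  congr 1
  ext w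
  constructor
  · rintro ⟨y, rfl⟩
    refine ⟨List.ofFn y, by simp, ?_⟩
    simp [W, List.map_ofFn]
    rfl
  · rintro ⟨l, hl, rfl⟩
    subst hl
    refine ⟨l.get, ?_⟩
    simp [W, List.map_ofFn]

private lemma Tmul (p q : ℕ) (a b : FreeAlgebra ℚ X) (ha : a ∈ Wspan p) (hb : b ∈ Wspan q) :
    a * b ∈ Wspan (p + q) := by
  induction ha using Submodule.span_induction with
  | mem a ha =>
    induction hb using Submodule.span_induction with
    | mem b hb =>
      obtain ⟨u, hu, rfl⟩ := ha
      obtain ⟨v, hv, rfl⟩ := hb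
      refine Submodule.subset_span ⟨u ++ v, by simp [hu, hv], ?_⟩
      simp [W]
    | zero => simp
    | add b c _ _ ihb ihc => rw [mul_add]; exact add_mem ihb ihc
    | smul c b _ ihb => rw [mul_smul_comm]; exact Submodule.smul_mem _ _ ihb
  | zero => simp
  | add a c _ _ iha ihc => rw [add_mul]; exact add_mem iha ihc
  | smul c a _ iha => rw [smul_mul_assoc]; exact Submodule.smul_mem _ _ iha

private def adR : FreeAlgebra ℚ X →ₗ[ℚ] Module.End ℚ (FreeAlgebra ℚ X) :=
  (LinearMap.mul ℚ _).flip - (LinearMap.mul ℚ _)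

private lemma adR_apply (a m : FreeAlgebra ℚ X) : adR a m = m * a - a * m := rfl

private def Rop : FreeAlgebra ℚ X →ₐ[ℚ] (Module.End ℚ (FreeAlgebra ℚ X))ᵐᵒᵖ :=
  FreeAlgebra.lift ℚ fun x => op (adR (ι ℚ x))

private lemma adR_bracket (a b : FreeAlgebra ℚ X) :
    adR (a * b - b * a) = adR b * adR a - adR a * adR b := by
  apply LinearMap.ext
  intro m
  simp only [adR_apply, LinearMap.sub_apply, Module.End.mul_apply, adR_apply]
  noncomm_ring

private def Sker : LieSubalgebra ℚ (FreeAlgebra ℚ X) where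
  carrier := {a | Rop a = op (adR a)}
  add_mem' := by
    intro a b ha hb
    simp only [Set.mem_setOf_eq] at *
    rw [map_add, map_add, ha, hb, op_add]
  zero_mem' := by
    simp only [Set.mem_setOf_eq, map_zero, op_zero]
  smul_mem' := by
    intro c a ha
    simp only [Set.mem_setOf_eq] at *
    rw [map_smul, map_smul, ha, op_smul]
  lie_mem' := by
    intro a b ha hb
    simp only [Set.mem_setOf_eq] at *
    rw [Ring.lie_def, map_sub, map_mul, map_mul, ha, hb, adR_bracket]
    simp [op_sub, op_mul]

private lemma Rop_lie (LieX : LieSubalgebra ℚ (FreeAlgebra ℚ X))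
    (hLieX : LieX = LieSubalgebra.lieSpan ℚ (FreeAlgebra ℚ X)
      (Set.range (FreeAlgebra.ι ℚ : X → FreeAlgebra ℚ X))) :
    ∀ l ∈ LieX, Rop l = op (adR l) := by
  have hle : LieX ≤ Sker := by
    rw [hLieX]
    apply LieSubalgebra.lieSpan_le.mpr
    rintro _ ⟨x, rfl⟩
    show Rop (ι ℚ x) = op (adR (ι ℚ x))
    simp [Rop]
  intro l hl
  exact hle hl

private lemma hDW (D : FreeAlgebra ℚ X →ₗ[ℚ] FreeAlgebra ℚ X)
    (hDword : ∀ (n : ℕ) (y : Fin (n + 1) → X),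
      D (List.ofFn fun i => FreeAlgebra.ι ℚ (y i)).prod =
        (((List.ofFn y).tail).map fun z => FreeAlgebra.ι ℚ z).foldl
          (fun a b => a * b - b * a) (FreeAlgebra.ι ℚ (y 0)))
    (y : X) (t : List X) :
    D (W (y :: t)) = (t.map (ι ℚ)).foldl (fun a b => a * b - b * a) (ι ℚ y) := by
  have h := hDword t.length (y :: t).get
  simp only [List.ofFn_get] at h
  convert h using 2 <;> simp [W, List.map_ofFn]

section Dmul

variable (D : FreeAlgebra ℚ X →ₗ[ℚ] FreeAlgebra ℚ X)
  (hDWl : ∀ (y : X) (t : List X),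
    D (W (y :: t)) = (t.map (ι ℚ)).foldl (fun a b => a * b - b * a) (ι ℚ y))

include hDWl in
private lemma hDW_append (y : X) (t : List X) (z : X) :
    D (W ((y :: t) ++ [z])) = D (W (y :: t)) * ι ℚ z - ι ℚ z * D (W (y :: t)) := by
  have h1 := hDWl y (t ++ [z])
  rw [show (y :: t) ++ [z] = y :: (t ++ [z]) from rfl, h1, List.map_append, List.foldl_append,
    ← hDWl y t]
  simp

include hDWl in
private lemma Dmul_word (y : X) (t : List X) :
    ∀ v : List X, D (W (y :: t) * W v) = (Rop (W v)).unop (D (W (y :: t))) := by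
  intro v
  induction v using List.reverseRecOn with
  | nil =>
    show D (W (y :: t) * W []) = (Rop (W [])).unop (D (W (y :: t)))
    rw [show W ([] : List X) = 1 from rfl, map_one, mul_one]
    rfl
  | append_singleton v z ih =>
    have key : W (y :: t) * W (v ++ [z]) = W ((y :: (t ++ v)) ++ [z]) := by
      simp [W, mul_assoc]
    have key2 : W (y :: (t ++ v)) = W (y :: t) * W v := by simp [W, mul_assoc]
    rw [key, hDW_append D hDWl, key2, ih]
    have key3 : W (v ++ [z]) = W v * ι ℚ z := by simp [W]
    rw [key3, map_mul]
    have key4 : Rop (ι ℚ z) = op (adR (ι ℚ z)) := by simp [Rop]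
    rw [key4]
    simp only [unop_mul, unop_op, Module.End.mul_apply]
    rw [adR_apply]

include hDWl in
private lemma Dmul_span (p q : ℕ) (a b : FreeAlgebra ℚ X)
    (ha : a ∈ Wspan (p + 1)) (hb : b ∈ Wspan q) :
    D (a * b) = (Rop b).unop (D a) := by
  induction hb using Submodule.span_induction with
  | mem b hb =>
    obtain ⟨v, hv, rfl⟩ := hb
    induction ha using Submodule.span_induction with
    | mem a ha =>
      obtain ⟨u, hu, rfl⟩ := ha
      match u, hu with
      | y :: t, _ => exact Dmul_word D hDWl y t v
    | zero => simp
    | add a c _ _ iha ihc => rw [add_mul, map_add, map_add, iha, ihc, map_add]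
    | smul c a _ iha => rw [smul_mul_assoc, map_smul, map_smul, iha, map_smul]
  | zero => rw [map_zero, mul_zero, map_zero, unop_zero]; rfl
  | add b c _ _ ihb ihc =>
    rw [mul_add, map_add, map_add, unop_add, LinearMap.add_apply, ihb, ihc]
  | smul c b _ ihb =>
    have h : Rop (c • b) = c • Rop b := map_smul Rop.toLinearMap c b
    rw [mul_smul_comm, map_smul, h, unop_smul, LinearMap.smul_apply, ihb]

end Dmul

end DSWAux

/-- Dynkin–Specht–Wever: In `A = FreeAlgebra ℚ X` graded by word length
(`Tₙ(X)` the span of the words of length `n`), with `Lie(X)` the Lie subalgebra generated by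
the letters and `D` the linear map given on words by `D(y₁⋯yₙ) = [⋯[[y₁,y₂],y₃]⋯,yₙ]`
(`D(1) = 0`), one has `D(l) = n·l` for every `l ∈ Tₙ(X) ∩ Lie(X)` (`n ≥ 1`); moreover `D`
maps `Tₙ(X)` into `Tₙ(X) ∩ Lie(X)`, so that `(1/n)·D` restricted to `Tₙ(X)` is a projection
of `Tₙ(X)` onto `Tₙ(X) ∩ Lie(X)`. -/
theorem statement2 (X : Type)
    (LieX : LieSubalgebra ℚ (FreeAlgebra ℚ X))
    (hLieX : LieX = LieSubalgebra.lieSpan ℚ (FreeAlgebra ℚ X)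
      (Set.range (FreeAlgebra.ι ℚ : X → FreeAlgebra ℚ X)))
    (T : ℕ → Submodule ℚ (FreeAlgebra ℚ X))
    (hT : ∀ n : ℕ, T n = Submodule.span ℚ
      { w : FreeAlgebra ℚ X | ∃ y : Fin n → X,
          w = (List.ofFn fun i => FreeAlgebra.ι ℚ (y i)).prod })
    (D : FreeAlgebra ℚ X →ₗ[ℚ] FreeAlgebra ℚ X)
    (hD1 : D 1 = 0)
    (hDword : ∀ (n : ℕ) (y : Fin (n + 1) → X),
      D (List.ofFn fun i => FreeAlgebra.ι ℚ (y i)).prod =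
        (((List.ofFn y).tail).map fun z => FreeAlgebra.ι ℚ z).foldl
          (fun a b => a * b - b * a) (FreeAlgebra.ι ℚ (y 0)))
    (n : ℕ) (hn : 1 ≤ n) :
    (∀ l ∈ T n ⊓ LieX.toSubmodule, D l = (n : ℚ) • l) ∧
    (∀ a ∈ T n, ((n : ℚ)⁻¹ • D a) ∈ T n ⊓ LieX.toSubmodule) := by
  classical
  have hT' : ∀ m, T m = Wspan m := T_eq T hT
  have hι_T1 : ∀ x : X, FreeAlgebra.ι ℚ x ∈ Wspan (X := X) 1 :=
    fun x => Submodule.subset_span ⟨[x], rfl, (W_singleton x).symm⟩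
  have hι_L : ∀ x : X, FreeAlgebra.ι ℚ x ∈ LieX := fun x => by
    rw [hLieX]; exact LieSubalgebra.subset_lieSpan ⟨x, rfl⟩
  have hDWl := hDW D hDword
  -- the iterated bracket of a word lies in `Wspan (len+1) ⊓ LieX`
  have foldmem : ∀ (t : List X) (y : X),
      (t.map (FreeAlgebra.ι ℚ)).foldl (fun a b => a * b - b * a) (FreeAlgebra.ι ℚ y)
        ∈ Wspan (t.length + 1) ⊓ LieX.toSubmodule := by
    intro t
    induction t using List.reverseRecOn with
    | nil => intro y; exact ⟨hι_T1 y, hι_L y⟩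
    | append_singleton t z ih =>
      intro y
      rw [List.map_append, List.foldl_append,
        show (t ++ [z]).length = t.length + 1 from by simp]
      simp only [List.map_cons, List.map_nil, List.foldl_cons, List.foldl_nil]
      obtain ⟨h1, h2⟩ := ih y
      constructor
      · refine sub_mem (Tmul _ _ _ _ h1 (hι_T1 z)) ?_
        have hm2 := Tmul _ _ _ _ (hι_T1 z) h1
        rwa [show 1 + (t.length + 1) = t.length + 1 + 1 from by omega] at hm2
      · have h3 := LieX.lie_mem h2 (hι_L z)
        rw [Ring.lie_def] at h3
        exact h3
  -- part 2 : D maps T n into T n ⊓ LieX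
  have part2 : ∀ a ∈ T n, D a ∈ T n ⊓ LieX.toSubmodule := by
    obtain ⟨m, rfl⟩ : ∃ m, n = m + 1 := ⟨n - 1, by omega⟩
    intro a ha
    rw [hT' (m + 1)] at ha ⊢
    induction ha using Submodule.span_induction with
    | mem a ha =>
      obtain ⟨l, hl, rfl⟩ := ha
      match l, hl with
      | y :: t, hl =>
        rw [hDWl y t]
        have h4 := foldmem t y
        have ht : t.length = m := by simpa using hl
        rwa [ht] at h4
    | zero => simp
    | add a b _ _ iha ihb => rw [map_add]; exact add_mem iha ihb
    | smul c a _ iha => rw [map_smul]; exact Submodule.smul_mem _ _ iha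
  -- the homogeneous eigen-submodules
  set Kk : ℕ → Submodule ℚ (FreeAlgebra ℚ X) := fun m =>
    (Wspan m ⊓ LieX.toSubmodule) ⊓ LinearMap.ker (D - (m : ℚ) • LinearMap.id) with hKk
  have hKmem : ∀ (m : ℕ) (a : FreeAlgebra ℚ X),
      a ∈ Kk m ↔ (a ∈ Wspan m ∧ a ∈ LieX) ∧ D a = (m : ℚ) • a := by
    intro m a
    simp [hKk, Submodule.mem_inf, LinearMap.mem_ker, LinearMap.sub_apply, sub_eq_zero,
      and_assoc]
  have hT0 : ∀ a ∈ Wspan (X := X) 0, ∃ c : ℚ, a = c • 1 := by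
    intro a ha
    have hle : Wspan (X := X) 0 ≤ Submodule.span ℚ {(1 : FreeAlgebra ℚ X)} := by
      apply Submodule.span_le.mpr
      rintro w ⟨l, hl, rfl⟩
      rw [List.length_eq_zero_iff.mp hl]
      exact Submodule.mem_span_singleton_self _
    obtain ⟨c, hc⟩ := Submodule.mem_span_singleton.mp (hle ha)
    exact ⟨c, hc.symm⟩
  -- bracket closure
  have Kbr : ∀ p q (a b : FreeAlgebra ℚ X), a ∈ Kk p → b ∈ Kk q → ⁅a, b⁆ ∈ Kk (p + q) := by
    intro p q a b ha hb
    rw [hKmem] at ha hb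
    obtain ⟨⟨haT, haL⟩, haD⟩ := ha
    obtain ⟨⟨hbT, hbL⟩, hbD⟩ := hb
    match p, q with
    | 0, q =>
      obtain ⟨c, rfl⟩ := hT0 a haT
      have hz : ⁅c • (1 : FreeAlgebra ℚ X), b⁆ = 0 := by
        rw [Ring.lie_def, smul_mul_assoc, mul_smul_comm, one_mul, mul_one, sub_self]
      rw [hz]
      exact zero_mem _
    | p + 1, 0 =>
      obtain ⟨c, rfl⟩ := hT0 b hbT
      have hz : ⁅a, c • (1 : FreeAlgebra ℚ X)⁆ = 0 := by
        rw [Ring.lie_def, smul_mul_assoc, mul_smul_comm, one_mul, mul_one, sub_self]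
      rw [hz]
      exact zero_mem _
    | p + 1, q + 1 =>
      rw [hKmem]
      refine ⟨⟨?_, LieX.lie_mem haL hbL⟩, ?_⟩
      · rw [Ring.lie_def]
        refine sub_mem (Tmul _ _ _ _ haT hbT) ?_
        have h5 := Tmul _ _ _ _ hbT haT
        rwa [show q + 1 + (p + 1) = p + 1 + (q + 1) by omega] at h5
      · rw [Ring.lie_def, map_sub, Dmul_span D hDWl p (q + 1) a b haT hbT,
          Dmul_span D hDWl q (p + 1) b a hbT haT,
          Rop_lie LieX hLieX b hbL, Rop_lie LieX hLieX a haL]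
        simp only [MulOpposite.unop_op]
        rw [adR_apply, adR_apply, haD, hbD]
        push_cast
        rw [smul_mul_assoc, smul_mul_assoc, mul_smul_comm, mul_smul_comm]
        module
  -- the supremum of the Kk is closed under brackets
  have lieclosed : ∀ a ∈ (⨆ m, Kk m : Submodule ℚ (FreeAlgebra ℚ X)),
      ∀ b ∈ (⨆ m, Kk m : Submodule ℚ (FreeAlgebra ℚ X)),
        ⁅a, b⁆ ∈ (⨆ m, Kk m : Submodule ℚ (FreeAlgebra ℚ X)) := by
    intro a ha
    refine Submodule.iSup_induction Kk
      (motive := fun a => ∀ b ∈ (⨆ m, Kk m : Submodule ℚ (FreeAlgebra ℚ X)),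
        ⁅a, b⁆ ∈ (⨆ m, Kk m : Submodule ℚ (FreeAlgebra ℚ X))) ha ?_ ?_ ?_
    · intro p a ha b hb
      refine Submodule.iSup_induction Kk
        (motive := fun b => ⁅a, b⁆ ∈ (⨆ m, Kk m : Submodule ℚ (FreeAlgebra ℚ X))) hb ?_ ?_ ?_
      · intro q b hb
        exact Submodule.mem_iSup_of_mem (p + q) (Kbr p q a b ha hb)
      · beta_reduce; rw [lie_zero]; exact zero_mem _
      · intro b c ihb ihc; beta_reduce; rw [lie_add]; exact add_mem ihb ihc
    · intro b hb; rw [zero_lie]; exact zero_mem _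
    · intro a c iha ihc b hb
      rw [add_lie]
      exact add_mem (iha b hb) (ihc b hb)
  let Msub : LieSubalgebra ℚ (FreeAlgebra ℚ X) :=
    { toSubmodule := ⨆ m, Kk m
      lie_mem' := fun {a b} ha hb => lieclosed a ha b hb }
  have hLM : LieX ≤ Msub := by
    rw [hLieX]
    apply LieSubalgebra.lieSpan_le.mpr
    rintro _ ⟨x, rfl⟩
    show FreeAlgebra.ι ℚ x ∈ (⨆ m, Kk m : Submodule ℚ (FreeAlgebra ℚ X))
    apply Submodule.mem_iSup_of_mem 1
    rw [hKmem]
    refine ⟨⟨hι_T1 x, hι_L x⟩, ?_⟩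
    have h6 := hDWl x []
    simp only [List.map_nil, List.foldl_nil] at h6
    rw [W_singleton] at h6
    rw [h6, Nat.cast_one, one_smul]
  -- projection facts
  have projT : ∀ (m : ℕ) (a : FreeAlgebra ℚ X), a ∈ Wspan m →
      proj (X := X) n a = if m = n then a else 0 := by
    intro m a ha
    induction ha using Submodule.span_induction with
    | mem a ha =>
      obtain ⟨l, hl, rfl⟩ := ha
      rw [proj_W, hl]
    | zero => rw [map_zero]; split <;> rfl
    | add a b _ _ iha ihb => rw [map_add, iha, ihb]; split <;> simp
    | smul c a _ iha => rw [map_smul, iha]; split <;> simp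
  have hproj_sup : ∀ a ∈ (⨆ m, Kk m : Submodule ℚ (FreeAlgebra ℚ X)),
      proj (X := X) n a ∈ Kk n := by
    intro a ha
    refine Submodule.iSup_induction Kk (motive := fun a => proj (X := X) n a ∈ Kk n) ha ?_ ?_ ?_
    · intro m a ha
      have haT : a ∈ Wspan m := ((hKmem m a).mp ha).1.1
      rw [projT m a haT]
      by_cases hmn : m = n
      · rw [if_pos hmn]; exact hmn ▸ ha
      · rw [if_neg hmn]; exact zero_mem _
    · beta_reduce; rw [map_zero]; exact zero_mem _
    · intro a b iha ihb; beta_reduce; rw [map_add]; exact add_mem iha ihb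
  constructor
  · intro l hl
    obtain ⟨hlT, hlL⟩ := Submodule.mem_inf.mp hl
    rw [hT'] at hlT
    have hsup : l ∈ (⨆ m, Kk m : Submodule ℚ (FreeAlgebra ℚ X)) := hLM hlL
    have h7 := hproj_sup l hsup
    rw [projT n l hlT, if_pos rfl] at h7
    exact ((hKmem n l).mp h7).2
  · intro a ha
    exact Submodule.smul_mem _ _ (part2 a ha)
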